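/- Let T be a finite tree on n vertices and v ∈ V(T). Then there exists a strictly increasing (by inclusion) chain of vertex subsets B₁ ⊊ B₂ ⊊ ⋯ ⊊ B_m of V(T), of length m ≥ ⌊log₂ n⌋ + 1, such that v ∈ B₁ and for every i both T[B_i] and T[V(T) \ B_i together with one cut vertex] are connected; more precisely, for each i there is a vertex v_i with B_i ∩ A_i = {v_i}, A_i ∪ B_i = V(T), and T[A_i], T[B_i] both connected. -/

import Mathlib

open SimpleGraph Set

section Helpers

variable {V : Type*} {T : SimpleGraph V}

private lemma reach_of_walk {U : Set V} :
    ∀ {x y : V} (p : T.Walk x y), (∀ z ∈ p.support, z ∈ U) →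
      ∀ (hx : x ∈ U) (hy : y ∈ U), (T.induce U).Reachable ⟨x, hx⟩ ⟨y, hy⟩ := by
  intro x y p
  induction p with
  | nil => intro _ hx hy; exact Reachable.refl _
  | @cons a b c hab p ih =>
    intro hsup ha hc
    have hb : b ∈ U := hsup b (by rw [Walk.support_cons]; exact List.mem_cons_of_mem _ p.start_mem_support)
    have hadj : (T.induce U).Adj ⟨a, ha⟩ ⟨b, hb⟩ := hab
    exact hadj.reachable.trans (ih (fun z hz => hsup z (by rw [Walk.support_cons]; exact List.mem_cons_of_mem _ hz)) hb hc)

private lemma walks_of_conn {U : Set V} (h : (T.induce U).Connected) {x y : V}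
    (hx : x ∈ U) (hy : y ∈ U) : ∃ p : T.Walk x y, ∀ z ∈ p.support, z ∈ U := by
  obtain ⟨p⟩ := h.preconnected ⟨x, hx⟩ ⟨y, hy⟩
  refine ⟨p.map ⟨Subtype.val, fun h => h⟩, ?_⟩
  intro z hz
  rw [Walk.support_map] at hz
  obtain ⟨⟨z', hz'⟩, _, rfl⟩ := List.mem_map.mp hz
  exact hz'

private lemma conn_of_walks {U : Set V} {x₀ : V} (hx₀ : x₀ ∈ U)
    (h : ∀ y ∈ U, ∃ p : T.Walk x₀ y, ∀ z ∈ p.support, z ∈ U) :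
    (T.induce U).Connected := by
  rw [connected_iff]
  refine ⟨fun a b => ?_, ⟨⟨x₀, hx₀⟩⟩⟩
  obtain ⟨p, hp⟩ := h a a.2
  obtain ⟨q, hq⟩ := h b b.2
  exact (reach_of_walk p hp hx₀ a.2).symm.trans (reach_of_walk q hq hx₀ b.2)

private lemma conn_singleton (T : SimpleGraph V) (v : V) : (T.induce {v}).Connected := by
  refine conn_of_walks rfl (fun y hy => ?_)
  have : y = v := hy
  subst this
  exact ⟨Walk.nil, by simp⟩

private lemma conn_union_bridge {U₁ U₂ : Set V} (h₁ : (T.induce U₁).Connected)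
    (h₂ : (T.induce U₂).Connected) {x₁ x₂ : V} (hx₁ : x₁ ∈ U₁) (hx₂ : x₂ ∈ U₂)
    (hadj : T.Adj x₁ x₂) : (T.induce (U₁ ∪ U₂)).Connected := by
  refine conn_of_walks (x₀ := x₁) (Or.inl hx₁) ?_
  rintro y (hy | hy)
  · obtain ⟨p, hp⟩ := walks_of_conn h₁ hx₁ hy
    exact ⟨p, fun z hz => Or.inl (hp z hz)⟩
  · obtain ⟨p, hp⟩ := walks_of_conn h₂ hx₂ hy
    refine ⟨Walk.cons hadj p, ?_⟩
    intro z hz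
    rw [Walk.support_cons] at hz
    rcases List.mem_cons.mp hz with rfl | hz
    · exact Or.inl hx₁
    · exact Or.inr (hp z hz)

private lemma exists_nbr {S : Set V} {v : V} :
    ∀ {x e : V} (p : T.Walk x e), (∀ z ∈ p.support, z ∈ S) → x ≠ v → e = v →
      ∃ z, z ∈ S ∧ z ≠ v ∧ T.Adj v z := by
  intro x e p
  induction p with
  | nil => intro _ hxv hev; exact absurd hev hxv
  | @cons a b c hab p ih =>
    intro hsup hxv hev
    by_cases hb : b = v
    · refine ⟨a, hsup a (by rw [Walk.support_cons]; exact List.mem_cons_self), hxv, ?_⟩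
      rw [hb] at hab; exact hab.symm
    · exact ih (fun z hz => hsup z (by rw [Walk.support_cons]; exact List.mem_cons_of_mem _ hz)) hb hev

private lemma exists_adj_into {S C : Set V} {v : V} (hvC : v ∉ C)
    (hclosed : ∀ z ∈ C, ∀ u, u ∈ S → T.Adj z u → u ∈ C ∨ u = v) :
    ∀ {x e : V} (p : T.Walk x e), (∀ z ∈ p.support, z ∈ S) → x ∈ C → e = v →
      ∃ z ∈ C, T.Adj v z := by
  intro x e p
  induction p with
  | nil => intro _ hx hev; subst hev; exact absurd hx hvC
  | @cons a b c hab p ih =>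
    intro hsup hx hev
    by_cases hb : b = v
    · exact ⟨a, hx, by rw [hb] at hab; exact hab.symm⟩
    · have hbS : b ∈ S := hsup b (by rw [Walk.support_cons]; exact List.mem_cons_of_mem _ p.start_mem_support)
      have hbC : b ∈ C := by
        rcases hclosed a hx b hbS hab with h | h
        · exact h
        · exact absurd h hb
      exact ih (fun z hz => hsup z (by rw [Walk.support_cons]; exact List.mem_cons_of_mem _ hz)) hbC hev

private lemma avoid_comp {S C : Set V} {v : V} (hvS : v ∈ S) (hvC : v ∉ C)
    (hclosed : ∀ z ∈ C, ∀ u, u ∈ S → T.Adj z u → u ∈ C ∨ u = v) :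
    ∀ {x e : V} (p : T.Walk x e), (∀ z ∈ p.support, z ∈ S) → x ∈ S \ C → e = v →
      ∃ q : T.Walk x e, ∀ z ∈ q.support, z ∈ S \ C := by
  intro x e p
  induction p with
  | nil =>
    intro _ hx _
    exact ⟨Walk.nil, by intro z hz; simp at hz; subst hz; exact hx⟩
  | @cons a b c hab p ih =>
    intro hsup hx hev
    by_cases hb : b ∈ C
    · have : a ∈ C ∨ a = v := hclosed b hb a hx.1 hab.symm
      rcases this with h | h
      · exact absurd h hx.2
      · subst hev; subst h
        exact ⟨Walk.nil, by intro z hz; simp at hz; subst hz; exact ⟨hvS, hvC⟩⟩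
    · have hbS : b ∈ S := hsup b (by rw [Walk.support_cons]; exact List.mem_cons_of_mem _ p.start_mem_support)
      obtain ⟨q, hq⟩ := ih (fun z hz => hsup z (by rw [Walk.support_cons]; exact List.mem_cons_of_mem _ hz)) ⟨hbS, hb⟩ hev
      refine ⟨Walk.cons hab q, ?_⟩
      intro z hz
      rw [Walk.support_cons] at hz
      rcases List.mem_cons.mp hz with rfl | hz
      · exact hx
      · exact hq z hz

/-- vertices of a walk inside `W` starting at a point of the component of `a` stay in
the component of `a`. -/
private lemma comp_absorb {W : Set V} {a : V} :
    ∀ {x y : V} (p : T.Walk x y), (∀ u ∈ p.support, u ∈ W) →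
      (x ∈ W ∧ ∃ q : T.Walk a x, ∀ u ∈ q.support, u ∈ W) →
      ∀ u ∈ p.support, u ∈ W ∧ ∃ q : T.Walk a u, ∀ u' ∈ q.support, u' ∈ W := by
  intro x y p
  induction p with
  | nil =>
    intro _ hx u hu
    simp at hu; subst hu; exact hx
  | @cons s b c hab p ih =>
    intro hsup hx u hu
    have hbW : b ∈ W := hsup b (by rw [Walk.support_cons]; exact List.mem_cons_of_mem _ p.start_mem_support)
    have hbK : b ∈ W ∧ ∃ q : T.Walk a b, ∀ u' ∈ q.support, u' ∈ W := by
      obtain ⟨hxW, q, hq⟩ := hx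
      refine ⟨hbW, q.concat hab, ?_⟩
      intro u' hu'
      rw [Walk.support_concat] at hu'
      rcases (show u' ∈ q.support ∨ u' = b by simpa using hu') with h | rfl
      · exact hq u' h
      · exact hbW
    rw [Walk.support_cons] at hu
    rcases List.mem_cons.mp hu with rfl | hu
    · exact hx
    · exact ih (fun z hz => hsup z (by rw [Walk.support_cons]; exact List.mem_cons_of_mem _ hz)) hbK u hu

private lemma log_step {N k : ℕ} (h2 : 2 ≤ N) (hk : N / 2 ≤ k) :
    Nat.log 2 N ≤ Nat.log 2 k + 1 := by
  have h1 : Nat.log 2 (N / 2) = Nat.log 2 N - 1 := Nat.log_div_base 2 N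
  have h3 : Nat.log 2 (N / 2) ≤ Nat.log 2 k := Nat.log_mono_right hk
  have h4 : 0 < Nat.log 2 N := Nat.log_pos (by norm_num) h2
  omega

end Helpers

section Key

variable {V : Type*} [Fintype V]

private lemma key (T : SimpleGraph V) :
    ∀ (N : ℕ) (S : Set V) (v : V), v ∈ S → S.ncard = N → (T.induce S).Connected →
    ∃ (m : ℕ) (A B : ℕ → Set V) (w : ℕ → V),
      m ≥ Nat.log 2 N + 1 ∧
      B 0 = {v} ∧ B (m - 1) = S ∧
      (∀ i, ∀ j < m, i < j → B i ⊂ B j) ∧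
      (∀ i < m, A i ∪ B i = S) ∧
      (∀ i < m, A i ∩ B i = {w i}) ∧
      (∀ i < m, (T.induce (A i)).Connected ∧ (T.induce (B i)).Connected) := by
  intro N
  induction N using Nat.strong_induction_on with
  | _ N IH =>
  intro S v hv hcard hconn
  by_cases hSv : S = {v}
  · -- base case : S = {v}
    subst hSv
    have hN : N = 1 := by rw [← hcard, Set.ncard_singleton]
    subst hN
    refine ⟨1, fun _ => {v}, fun _ => {v}, fun _ => v, ?_, rfl, rfl, ?_, ?_, ?_, ?_⟩
    · rw [Nat.log_one_right]
    · intro i j hj hij; omega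
    · intro i _; rw [Set.union_self]
    · intro i _; rw [Set.inter_self]
    · intro i _; exact ⟨conn_singleton T v, conn_singleton T v⟩
  · -- S has at least two elements
    obtain ⟨y, hyS, hyv⟩ : ∃ y, y ∈ S ∧ y ≠ v := by
      by_contra h
      push_neg at h
      exact hSv (Set.eq_singleton_iff_unique_mem.mpr ⟨hv, h⟩)
    have hN2 : 2 ≤ N := by
      rw [← hcard]
      calc 2 = ({v, y} : Set V).ncard := (Set.ncard_pair (Ne.symm hyv)).symm
        _ ≤ S.ncard := Set.ncard_le_ncard (by
              intro z hz
              rcases hz with rfl | hz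
              · exact hv
              · simp at hz; subst hz; exact hyS) S.toFinite
    have hNpos : 0 < N := by omega
    have hWcard : (S \ {v}).ncard = N - 1 := by
      rw [Set.ncard_diff_singleton_of_mem hv, hcard]
    have hyW : y ∈ S \ {v} := ⟨hyS, hyv⟩
    by_cases hWconn : (T.induce (S \ {v})).Connected
    · -- leaf case: S \ {v} connected
      obtain ⟨p₀, hp₀⟩ := walks_of_conn hconn hyS hv
      obtain ⟨z, hzS, hzv, hzadj⟩ := exists_nbr (v := v) p₀ hp₀ hyv rfl
      have hzW : z ∈ S \ {v} := ⟨hzS, hzv⟩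
      obtain ⟨m', A', B', w', hm', hB0', hBlast', hchain', hABu', hABi', hcc'⟩ :=
        IH (N - 1) (by omega) (S \ {v}) z hzW hWcard hWconn
      have hm'pos : 1 ≤ m' := by
        have : 0 ≤ Nat.log 2 (N - 1) := Nat.zero_le _
        omega
      have hB'sub : ∀ k < m', B' k ⊆ S \ {v} := by
        intro k hk
        rw [← hABu' k hk]; exact Set.subset_union_right
      have hA'sub : ∀ k < m', A' k ⊆ S \ {v} := by
        intro k hk
        rw [← hABu' k hk]; exact Set.subset_union_left
      have hz_mem : ∀ k < m', z ∈ B' k := by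
        intro k hk
        rcases Nat.eq_zero_or_pos k with rfl | hkpos
        · rw [hB0']; rfl
        · exact (hchain' 0 k hk hkpos).subset (by rw [hB0']; rfl)
      refine ⟨m' + 1,
        (fun i => match i with | 0 => S | (k+1) => A' k),
        (fun i => match i with | 0 => {v} | (k+1) => B' k ∪ {v}),
        (fun i => match i with | 0 => v | (k+1) => w' k),
        ?_, rfl, ?_, ?_, ?_, ?_, ?_⟩
      · -- length bound
        have hstep : Nat.log 2 N ≤ Nat.log 2 (N - 1) + 1 := log_step hN2 (by omega)
        omega
      · -- last set
        obtain ⟨k, rfl⟩ : ∃ k, m' = k + 1 := ⟨m' - 1, by omega⟩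
        show B' k ∪ {v} = S
        have : B' k = S \ {v} := by simpa using hBlast'
        rw [this, Set.diff_union_of_subset (Set.singleton_subset_iff.mpr hv)]
      · -- chain
        intro i j hj hij
        match j, i with
        | (l+1), 0 =>
          show ({v} : Set V) ⊂ B' l ∪ {v}
          have hl : l < m' := by omega
          refine (Set.ssubset_iff_of_subset (show ({v} : Set V) ⊆ B' l ∪ {v} from fun x hx => Or.inr hx)).mpr ?_
          exact ⟨z, Or.inl (hz_mem l hl), fun h => hzv (by simpa using h)⟩
        | (l+1), (k+1) =>
          show B' k ∪ {v} ⊂ B' l ∪ {v}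
          have hl : l < m' := by omega
          have hss : B' k ⊂ B' l := hchain' k l hl (by omega)
          obtain ⟨x, hxl, hxk⟩ := Set.exists_of_ssubset hss
          refine (Set.ssubset_iff_of_subset (Set.union_subset_union_left _ hss.subset)).mpr ?_
          refine ⟨x, Or.inl hxl, ?_⟩
          rintro (h | h)
          · exact hxk h
          · exact ((hB'sub l hl) hxl).2 (by simpa using h)
      · -- union
        intro i hi
        match i with
        | 0 => exact Set.union_eq_self_of_subset_right (Set.singleton_subset_iff.mpr hv)
        | (k+1) =>
          show A' k ∪ (B' k ∪ {v}) = S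
          have hk : k < m' := by omega
          rw [← Set.union_assoc, hABu' k hk, Set.diff_union_of_subset (Set.singleton_subset_iff.mpr hv)]
      · -- intersection
        intro i hi
        match i with
        | 0 => exact Set.inter_eq_self_of_subset_right (Set.singleton_subset_iff.mpr hv)
        | (k+1) =>
          show A' k ∩ (B' k ∪ {v}) = {w' k}
          have hk : k < m' := by omega
          rw [Set.inter_union_distrib_left, hABi' k hk,
            Set.inter_singleton_eq_empty.mpr (fun h => (hA'sub k hk h).2 rfl), Set.union_empty]
      · -- connectivity
        intro i hi
        match i with
        | 0 => exact ⟨hconn, conn_singleton T v⟩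
        | (k+1) =>
          have hk : k < m' := by omega
          refine ⟨(hcc' k hk).1, ?_⟩
          exact conn_union_bridge (hcc' k hk).2 (conn_singleton T v) (hz_mem k hk) rfl hzadj.symm
    · -- disconnected case
      obtain ⟨a, haW, b, hbW, hnab⟩ :
          ∃ a, a ∈ S \ {v} ∧ ∃ b, b ∈ S \ {v} ∧
            ¬ ∃ p : T.Walk a b, ∀ u ∈ p.support, u ∈ S \ {v} := by
        by_contra hcon
        push_neg at hcon
        exact hWconn (conn_of_walks hyW (fun t ht => hcon y hyW t ht))
      -- components
      set K : V → Set V := fun s =>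
        {t | t ∈ S \ {v} ∧ ∃ p : T.Walk s t, ∀ u ∈ p.support, u ∈ S \ {v}} with hK
      have hself : ∀ s, s ∈ S \ {v} → s ∈ K s := by
        intro s hs
        exact ⟨hs, Walk.nil, by intro u hu; simp at hu; subst hu; exact hs⟩
      have hKsub : ∀ s, K s ⊆ S \ {v} := fun s t ht => ht.1
      have hdisj : Disjoint (K a) (K b) := by
        rw [Set.disjoint_left]
        rintro t ⟨htW, p, hp⟩ ⟨_, q, hq⟩
        refine hnab ⟨p.append q.reverse, ?_⟩
        intro u hu
        rcases (Walk.mem_support_append_iff _ _).mp hu with h | h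
        · exact hp u h
        · rw [Walk.support_reverse] at h
          exact hq u (List.mem_reverse.mp h)
      have hsum : (K a).ncard + (K b).ncard ≤ N - 1 := by
        rw [← Set.ncard_union_eq hdisj (K a).toFinite (K b).toFinite, ← hWcard]
        exact Set.ncard_le_ncard (Set.union_subset (hKsub a) (hKsub b)) (S \ {v}).toFinite
      obtain ⟨c, hcW, hsmall⟩ : ∃ c, c ∈ S \ {v} ∧ 2 * (K c).ncard ≤ N - 1 := by
        rcases le_total ((K a).ncard) ((K b).ncard) with h | h
        · exact ⟨a, haW, by omega⟩
        · exact ⟨b, hbW, by omega⟩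
      set C : Set V := K c with hC
      have hcC : c ∈ C := hself c hcW
      have hCW : C ⊆ S \ {v} := hKsub c
      have hCS : C ⊆ S := hCW.trans Set.diff_subset
      have hvC : v ∉ C := fun h => (hCW h).2 rfl
      have hclosed : ∀ z ∈ C, ∀ u, u ∈ S → T.Adj z u → u ∈ C ∨ u = v := by
        intro z hz u huS hadj
        by_cases huv : u = v
        · exact Or.inr huv
        · left
          obtain ⟨hzW, p, hp⟩ := hz
          refine ⟨⟨huS, huv⟩, p.concat hadj, ?_⟩
          intro u' hu'
          rw [Walk.support_concat] at hu'
          rcases (show u' ∈ p.support ∨ u' = u by simpa using hu') with h | rfl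
          · exact hp u' h
          · exact ⟨huS, huv⟩
      have hCconn : (T.induce C).Connected := by
        refine conn_of_walks hcC ?_
        intro t ht
        obtain ⟨htW, p, hp⟩ := ht
        exact ⟨p, comp_absorb p hp (hself c hcW) ⟩
      have hCpos : 0 < C.ncard := (Set.ncard_pos C.toFinite).mpr ⟨c, hcC⟩
      have hCcard : C.ncard ≤ N - 1 := by omega
      -- the complement S \ C
      have hvS' : v ∈ S \ C := ⟨hv, hvC⟩
      have hS'card : (S \ C).ncard = N - C.ncard := by
        rw [Set.ncard_diff hCS C.toFinite, hcard]
      have hS'conn : (T.induce (S \ C)).Connected := by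
        refine conn_of_walks hvS' ?_
        intro t ht
        obtain ⟨p, hp⟩ := walks_of_conn hconn ht.1 hv
        obtain ⟨q, hq⟩ := avoid_comp hv hvC hclosed p hp ht rfl
        exact ⟨q.reverse, by
          intro u hu
          rw [Walk.support_reverse] at hu
          exact hq u (List.mem_reverse.mp hu)⟩
      have hvadj : ∃ z ∈ C, T.Adj v z := by
        obtain ⟨p, hp⟩ := walks_of_conn hconn (hCS hcC) hv
        exact exists_adj_into hvC hclosed p hp hcC rfl
      obtain ⟨zc, hzcC, hzcadj⟩ := hvadj
      obtain ⟨m', A', B', w', hm', hB0', hBlast', hchain', hABu', hABi', hcc'⟩ :=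
        IH (N - C.ncard) (by omega) (S \ C) v hvS' hS'card hS'conn
      have hm'pos : 1 ≤ m' := by
        have : 0 ≤ Nat.log 2 (N - C.ncard) := Nat.zero_le _
        omega
      have hB'sub : ∀ k < m', B' k ⊆ S \ C := by
        intro k hk
        rw [← hABu' k hk]; exact Set.subset_union_right
      have hA'sub : ∀ k < m', A' k ⊆ S \ C := by
        intro k hk
        rw [← hABu' k hk]; exact Set.subset_union_left
      have hv_mem : ∀ k < m', v ∈ B' k := by
        intro k hk
        rcases Nat.eq_zero_or_pos k with rfl | hkpos
        · rw [hB0']; rfl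
        · exact (hchain' 0 k hk hkpos).subset (by rw [hB0']; rfl)
      refine ⟨m' + 1,
        (fun i => match i with | 0 => S | (k+1) => A' k),
        (fun i => match i with | 0 => {v} | (k+1) => B' k ∪ C),
        (fun i => match i with | 0 => v | (k+1) => w' k),
        ?_, rfl, ?_, ?_, ?_, ?_, ?_⟩
      · -- length bound
        have hstep : Nat.log 2 N ≤ Nat.log 2 (N - C.ncard) + 1 := log_step hN2 (by omega)
        omega
      · -- last set
        obtain ⟨k, rfl⟩ : ∃ k, m' = k + 1 := ⟨m' - 1, by omega⟩
        show B' k ∪ C = S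
        have : B' k = S \ C := by simpa using hBlast'
        rw [this, Set.diff_union_of_subset hCS]
      · -- chain
        intro i j hj hij
        match j, i with
        | (l+1), 0 =>
          show ({v} : Set V) ⊂ B' l ∪ C
          have hl : l < m' := by omega
          refine (Set.ssubset_iff_of_subset (show ({v} : Set V) ⊆ B' l ∪ C from fun x hx => Or.inl (hx ▸ hv_mem l hl))).mpr ?_
          exact ⟨c, Or.inr hcC, fun h => (hCW hcC).2 (by simpa using h)⟩
        | (l+1), (k+1) =>
          show B' k ∪ C ⊂ B' l ∪ C
          have hl : l < m' := by omega
          have hss : B' k ⊂ B' l := hchain' k l hl (by omega)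
          obtain ⟨x, hxl, hxk⟩ := Set.exists_of_ssubset hss
          refine (Set.ssubset_iff_of_subset (Set.union_subset_union_left _ hss.subset)).mpr ?_
          refine ⟨x, Or.inl hxl, ?_⟩
          rintro (h | h)
          · exact hxk h
          · exact ((hB'sub l hl) hxl).2 h
      · -- union
        intro i hi
        match i with
        | 0 => exact Set.union_eq_self_of_subset_right (Set.singleton_subset_iff.mpr hv)
        | (k+1) =>
          show A' k ∪ (B' k ∪ C) = S
          have hk : k < m' := by omega
          rw [← Set.union_assoc, hABu' k hk, Set.diff_union_of_subset hCS]
      · -- intersection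
        intro i hi
        match i with
        | 0 => exact Set.inter_eq_self_of_subset_right (Set.singleton_subset_iff.mpr hv)
        | (k+1) =>
          show A' k ∩ (B' k ∪ C) = {w' k}
          have hk : k < m' := by omega
          have hAC : A' k ∩ C = ∅ := by
            rw [Set.eq_empty_iff_forall_notMem]
            rintro x ⟨hxA, hxC⟩
            exact (hA'sub k hk hxA).2 hxC
          rw [Set.inter_union_distrib_left, hABi' k hk, hAC, Set.union_empty]
      · -- connectivity
        intro i hi
        match i with
        | 0 => exact ⟨hconn, conn_singleton T v⟩
        | (k+1) =>
          have hk : k < m' := by omega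
          refine ⟨(hcc' k hk).1, ?_⟩
          exact conn_union_bridge (hcc' k hk).2 hCconn (hv_mem k hk) hzcC hzcadj

end Key

/-- weakened nested-cut lemma for trees: let `T` be a finite tree on `n`
vertices and `v ∈ V(T)`.  Then there is a strictly increasing chain of vertex sets
`B 0 ⊊ B 1 ⊊ ⋯ ⊊ B (m-1)` of length `m ≥ ⌊log₂ n⌋ + 1`, with `v ∈ B 0`, such that for
each `i < m` there are `A i` and a vertex `w i` with `A i ∪ B i = V(T)`,
`A i ∩ B i = {w i}`, and both `T[A i]` and `T[B i]` connected. -/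
theorem nested_cut_lemma_log {V : Type*} [Fintype V] (T : SimpleGraph V)
    (hT : T.IsTree) (v : V) :
    ∃ (m : ℕ) (A B : ℕ → Set V) (w : ℕ → V),
      m ≥ Nat.log 2 (Fintype.card V) + 1 ∧
      v ∈ B 0 ∧
      (∀ i, ∀ j < m, i < j → B i ⊂ B j) ∧
      (∀ i < m, A i ∪ B i = Set.univ) ∧
      (∀ i < m, A i ∩ B i = {w i}) ∧
      (∀ i < m, (T.induce (A i)).Connected ∧ (T.induce (B i)).Connected) := by
  have hconn : (T.induce (Set.univ : Set V)).Connected := by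
    refine conn_of_walks (x₀ := v) trivial ?_
    intro y _
    obtain ⟨p⟩ := hT.isConnected.preconnected v y
    exact ⟨p, fun z _ => trivial⟩
  have hcard : (Set.univ : Set V).ncard = Fintype.card V := by
    rw [Set.ncard_univ, Nat.card_eq_fintype_card]
  obtain ⟨m, A, B, w, h1, h2, _h3, h4, h5, h6, h7⟩ :=
    key T (Fintype.card V) Set.univ v trivial hcard hconn
  exact ⟨m, A, B, w, h1, by rw [h2]; rfl, h4, h5, h6, h7⟩
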